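/- Let F be a finite field with q elements, let r ≥ 1, let v̄ ≥ 2, and let C̄ be a nonempty q^r-divisible set of points of PG(v̄−1, q) with |C̄| = n̄. Identify F^{v̄+1} with F^{v̄} × F, let P be the point of F^{v̄+1} spanned by (0, 1), and let C be the set of all points of F^{v̄+1} that are contained in span(Q̄ × {0} ∪ P) for some Q̄ ∈ C̄ (i.e., the union of the point sets of the lines joining P to the embedded points of C̄, including P itself). Then |C| = 1 + q·n̄, and C is a q^{r+1}-divisible set of points of F^{v̄+1} if and only if (q − 1)·n̄ ≡ −1 (mod q^{r+1}). -/

import Mathlib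

open scoped Classical

section PGDefs

variable {F : Type} [Field F] {M : Type} [AddCommGroup M] [Module F M]

/-- The number of points of `C` contained in the subspace `S`, i.e. `|C ∩ S|`. -/
noncomputable def interCard (C : Finset (Submodule F M)) (S : Submodule F M) : ℕ :=
  (C.filter (fun P => P ≤ S)).card

/-- `H` is a hyperplane, i.e. a subspace of codimension 1. -/
def IsHyperplane (H : Submodule F M) : Prop :=
  Module.finrank F ↥H = Module.finrank F M - 1

/-- Every element of `C` is a point, i.e. a 1-dimensional subspace. -/
def IsPointSet (C : Finset (Submodule F M)) : Prop :=
  ∀ P ∈ C, Module.finrank F ↥P = 1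

/-- `C` is `Δ`-divisible: `|C ∩ H| ≡ |C| (mod Δ)` for every hyperplane `H`. -/
def DivisibleSet (Δ : ℕ) (C : Finset (Submodule F M)) : Prop :=
  ∀ H : Submodule F M, IsHyperplane H → interCard C H ≡ C.card [MOD Δ]

noncomputable instance fintypeSubmodule [Finite M] : Fintype (Submodule F M) :=
  have : Finite (Submodule F M) :=
    Finite.of_injective (fun S => (S : Set M)) SetLike.coe_injective
  Fintype.ofFinite _

end PGDefs

set_option linter.unusedSectionVars false

/-- A canonical generator of a `1`-dimensional subspace. -/
noncomputable def pgen (K : Type) [Field K] {M : Type} [AddCommGroup M] [Module K M]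
    (Q : Submodule K M) : M :=
  if h : ∃ w, w ≠ 0 ∧ Q = Submodule.span K {w} then h.choose else 0

lemma pgen_spec {K : Type} [Field K] {M : Type} [AddCommGroup M] [Module K M]
    {Q : Submodule K M} (hQ : Module.finrank K ↥Q = 1) :
    pgen K Q ≠ 0 ∧ Q = Submodule.span K {pgen K Q} := by
  have h : ∃ w, w ≠ 0 ∧ Q = Submodule.span K {w} := by
    obtain ⟨v, hv0, hv⟩ := finrank_eq_one_iff'.mp hQ
    refine ⟨(v : M), by simpa using hv0, le_antisymm (fun x hx => ?_) ?_⟩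
    · obtain ⟨c, hc⟩ := hv ⟨x, hx⟩
      exact Submodule.mem_span_singleton.mpr ⟨c, by simpa using congrArg Subtype.val hc⟩
    · rw [Submodule.span_le, Set.singleton_subset_iff]
      exact v.2
  rw [pgen, dif_pos h]
  exact h.choose_spec

lemma span_singleton_eq_unit {K : Type} [Field K] {M : Type} [AddCommGroup M] [Module K M]
    {u v : M} (h : Submodule.span K {u} = Submodule.span K {v}) :
    ∃ z : K, z ≠ 0 ∧ z • u = v := by
  obtain ⟨z, hz⟩ := Submodule.span_singleton_eq_span_singleton.mp h
  exact ⟨(z : K), z.ne_zero, hz⟩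

section Cone

variable {F : Type} [Field F] [Fintype F] {vb : ℕ}

/-- The apex point `⟨(0,1)⟩`. -/
def Ppt (F : Type) [Field F] (vb : ℕ) : Submodule F ((Fin vb → F) × F) :=
  Submodule.span F {((0 : Fin vb → F), (1 : F))}

/-- The point `⟨(w,c)⟩` where `w` is the chosen generator of `Qb`. -/
noncomputable def keyPt (F : Type) [Field F] {vb : ℕ} (Qb : Submodule F (Fin vb → F)) (c : F) :
    Submodule F ((Fin vb → F) × F) :=
  Submodule.span F {(pgen F Qb, c)}

/-- The cone over `S` with apex `Ppt`. -/
noncomputable def coneSet (F : Type) [Field F] [Fintype F] {vb : ℕ}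
    (S : Finset (Submodule F (Fin vb → F))) : Finset (Submodule F ((Fin vb → F) × F)) :=
  insert (Ppt F vb) (S.biUnion fun Qb => Finset.univ.image (keyPt F Qb))

lemma finrank_W : Module.finrank F ((Fin vb → F) × F) = vb + 1 := by
  rw [Module.finrank_prod, Module.finrank_fin_fun, Module.finrank_self]

lemma finrank_Ppt : Module.finrank F ↥(Ppt F vb) = 1 := by
  rw [Ppt]
  exact finrank_span_singleton (by simp [Prod.ext_iff])

lemma keyPt_eq {Qb Qb' : Submodule F (Fin vb → F)} {c c' : F}
    (hw : pgen F Qb ≠ 0)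
    (hQ : Qb = Submodule.span F {pgen F Qb})
    (hQ' : Qb' = Submodule.span F {pgen F Qb'})
    (h : keyPt F Qb c = keyPt F Qb' c') : Qb = Qb' ∧ c = c' := by
  obtain ⟨z, hz0, hz⟩ := span_singleton_eq_unit h
  have hz1 : z • pgen F Qb = pgen F Qb' := congrArg Prod.fst hz
  have hz2 : z * c = c' := congrArg Prod.snd hz
  have hQQ : Qb = Qb' := by
    rw [hQ, hQ', ← hz1, Submodule.span_singleton_smul_eq (IsUnit.mk0 z hz0)]
  refine ⟨hQQ, ?_⟩
  have hww : pgen F Qb' = pgen F Qb := by rw [← hQQ]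
  rw [hww] at hz1
  have hz3 : (z - 1) • pgen F Qb = 0 := by rw [sub_smul, one_smul, hz1, sub_self]
  rcases smul_eq_zero.mp hz3 with h1 | h2
  · rw [← hz2, sub_eq_zero.mp h1, one_mul]
  · exact absurd h2 hw

lemma keyPt_ne_Ppt {Qb : Submodule F (Fin vb → F)} (hw : pgen F Qb ≠ 0) (c : F) :
    keyPt F Qb c ≠ Ppt F vb := by
  intro h
  obtain ⟨z, hz0, hz⟩ := span_singleton_eq_unit h
  have h1 : z • pgen F Qb = 0 := congrArg Prod.fst hz
  rcases smul_eq_zero.mp h1 with h2 | h2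
  · exact hz0 h2
  · exact hw h2

lemma mem_coneSet {S : Finset (Submodule F (Fin vb → F))} {Q : Submodule F ((Fin vb → F) × F)} :
    Q ∈ coneSet F S ↔ Q = Ppt F vb ∨ ∃ Qb ∈ S, ∃ c : F, Q = keyPt F Qb c := by
  simp [coneSet, eq_comm]

lemma coneSet_card {S : Finset (Submodule F (Fin vb → F))}
    (hS : ∀ Qb ∈ S, pgen F Qb ≠ 0 ∧ Qb = Submodule.span F {pgen F Qb}) :
    (coneSet F S).card = 1 + Fintype.card F * S.card := by
  classical
  rw [coneSet, Finset.card_insert_of_notMem, Finset.card_biUnion]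
  · have hc : ∀ Qb ∈ S, (Finset.univ.image (keyPt F Qb)).card = Fintype.card F := by
      intro Qb hQb
      rw [Finset.card_image_of_injective _ (fun c c' hcc =>
        (keyPt_eq (hS Qb hQb).1 (hS Qb hQb).2 (hS Qb hQb).2 hcc).2), Finset.card_univ]
    rw [Finset.sum_congr rfl hc, Finset.sum_const, smul_eq_mul, mul_comm]
    omega
  · intro Qb hQb Qb' hQb' hne
    rw [Function.onFun, Finset.disjoint_left]
    rintro Q hQ hQ'
    obtain ⟨c, -, rfl⟩ := Finset.mem_image.mp hQ
    obtain ⟨c', -, hkey⟩ := Finset.mem_image.mp hQ'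
    exact hne ((keyPt_eq (hS Qb' hQb').1 (hS Qb' hQb').2 (hS Qb hQb).2 hkey).1).symm
  · intro hmem
    obtain ⟨Qb, hQb, hQ⟩ := Finset.mem_biUnion.mp hmem
    obtain ⟨c, -, hkey⟩ := Finset.mem_image.mp hQ
    exact keyPt_ne_Ppt (hS Qb hQb).1 c hkey

lemma cone_eq {Cb : Finset (Submodule F (Fin vb → F))} (hpts : IsPointSet Cb)
    (hne : Cb.Nonempty) :
    (Finset.univ.filter (fun Q : Submodule F ((Fin vb → F) × F) =>
        Module.finrank F ↥Q = 1 ∧ ∃ Qb ∈ Cb,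
          Q ≤ Submodule.map (LinearMap.inl F (Fin vb → F) F) Qb ⊔
              Submodule.span F {((0 : Fin vb → F), (1 : F))})) = coneSet F Cb := by
  ext Q
  rw [Finset.mem_filter, mem_coneSet]
  constructor
  · rintro ⟨-, h1, Qb, hQb, hle⟩
    obtain ⟨hw, hQs⟩ := pgen_spec (hpts Qb hQb)
    obtain ⟨hu, hQu⟩ := pgen_spec h1
    have humem : pgen F Q ∈ Submodule.map (LinearMap.inl F (Fin vb → F) F) Qb ⊔
        Submodule.span F {((0 : Fin vb → F), (1 : F))} :=
      hle (by
        have h0 : pgen F Q ∈ Submodule.span F {pgen F Q} :=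
          Submodule.mem_span_singleton_self _
        rwa [← hQu] at h0)
    rw [Submodule.mem_sup] at humem
    obtain ⟨y, hy, z, hz, hyz⟩ := humem
    obtain ⟨x, hx, rfl⟩ := Submodule.mem_map.mp hy
    obtain ⟨t, rfl⟩ := Submodule.mem_span_singleton.mp hz
    rw [hQs, Submodule.mem_span_singleton] at hx
    obtain ⟨a, rfl⟩ := hx
    have hu_eq : pgen F Q = (a • pgen F Qb, t) := by
      rw [← hyz]; simp [Prod.ext_iff]
    by_cases ha : a = 0
    · left
      subst ha
      have ht : t ≠ 0 := by
        intro ht0; apply hu; rw [hu_eq, ht0]; simp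
      rw [hQu, hu_eq, Ppt]
      have he : ((0:F) • pgen F Qb, t) = t • ((0 : Fin vb → F), (1:F)) := by
        simp [Prod.ext_iff]
      rw [he, Submodule.span_singleton_smul_eq (IsUnit.mk0 t ht)]
    · right
      refine ⟨Qb, hQb, a⁻¹ * t, ?_⟩
      rw [hQu, hu_eq, keyPt]
      have he : (a • pgen F Qb, t) = a • (pgen F Qb, a⁻¹ * t) := by
        rw [Prod.smul_mk]; congr 1
        rw [smul_eq_mul, ← mul_assoc, mul_inv_cancel₀ ha, one_mul]
      rw [he, Submodule.span_singleton_smul_eq (IsUnit.mk0 a ha)]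
  · rintro (rfl | ⟨Qb, hQb, c, rfl⟩)
    · obtain ⟨Qb, hQb⟩ := hne
      exact ⟨Finset.mem_univ _, finrank_Ppt, Qb, hQb, le_sup_right⟩
    · obtain ⟨hw, hQs⟩ := pgen_spec (hpts Qb hQb)
      refine ⟨Finset.mem_univ _, ?_, Qb, hQb, ?_⟩
      · rw [keyPt]
        exact finrank_span_singleton (by simp [Prod.ext_iff, hw])
      · rw [keyPt, Submodule.span_singleton_le_iff_mem, Submodule.mem_sup]
        refine ⟨LinearMap.inl F _ F (pgen F Qb), Submodule.mem_map_of_mem ?_,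
          c • ((0 : Fin vb → F), (1:F)),
          Submodule.smul_mem _ c (Submodule.mem_span_singleton_self _), ?_⟩
        · have h0 : pgen F Qb ∈ Submodule.span F {pgen F Qb} :=
            Submodule.mem_span_singleton_self _
          rwa [← hQs] at h0
        · simp [Prod.ext_iff]

lemma case1 {Cb : Finset (Submodule F (Fin vb → F))} (hpts : IsPointSet Cb)
    {H : Submodule F ((Fin vb → F) × F)} (hH : IsHyperplane H)
    (h01 : ((0 : Fin vb → F), (1:F)) ∈ H) :
    IsHyperplane (Submodule.comap (LinearMap.inl F (Fin vb → F) F) H) ∧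
    interCard (coneSet F Cb) H =
      1 + Fintype.card F * interCard Cb (Submodule.comap (LinearMap.inl F (Fin vb → F) F) H) := by
  classical
  set Hb := Submodule.comap (LinearMap.inl F (Fin vb → F) F) H with hHbdef
  have hshift : ∀ (x : Fin vb → F) (c : F), ((x, c) ∈ H ↔ (x, 0) ∈ H) := by
    intro x c
    constructor
    · intro h
      have hs := Submodule.sub_mem H h (Submodule.smul_mem H c h01)
      have he : (x, (0:F)) = (x, c) - c • ((0 : Fin vb → F), (1:F)) := by
        simp [Prod.ext_iff]
      rwa [← he] at hs
    · intro h
      have hs := Submodule.add_mem H h (Submodule.smul_mem H c h01)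
      have he : (x, c) = (x, (0:F)) + c • ((0 : Fin vb → F), (1:F)) := by
        simp [Prod.ext_iff]
      rwa [← he] at hs
  have hmemHb : ∀ x : Fin vb → F, x ∈ Hb ↔ (x, (0:F)) ∈ H := by
    intro x
    rw [hHbdef, Submodule.mem_comap, LinearMap.inl_apply]
  have hsup : Submodule.map (LinearMap.inl F (Fin vb → F) F) Hb ⊔ Ppt F vb = H := by
    apply le_antisymm
    · apply sup_le
      · rw [Submodule.map_le_iff_le_comap]
      · rw [Ppt, Submodule.span_singleton_le_iff_mem]; exact h01
    · rintro ⟨x, c⟩ hu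
      rw [Submodule.mem_sup]
      refine ⟨LinearMap.inl F _ F x, Submodule.mem_map_of_mem ?_,
        c • ((0 : Fin vb → F), (1:F)),
        Submodule.smul_mem _ c (Submodule.mem_span_singleton_self _), ?_⟩
      · rw [hmemHb]; exact (hshift x c).mp hu
      · simp [Prod.ext_iff]
  have hinf : Submodule.map (LinearMap.inl F (Fin vb → F) F) Hb ⊓ Ppt F vb = ⊥ := by
    rw [eq_bot_iff]
    intro u hu
    rw [Submodule.mem_inf] at hu
    obtain ⟨h1, h2⟩ := hu
    obtain ⟨x, -, rfl⟩ := Submodule.mem_map.mp h1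
    obtain ⟨t, ht⟩ := Submodule.mem_span_singleton.mp h2
    have hx : x = 0 := by
      have := congrArg Prod.fst ht
      simpa using this.symm
    simp [Submodule.mem_bot, hx]
  have hHbH : IsHyperplane Hb := by
    have h1 := Submodule.finrank_sup_add_finrank_inf_eq
      (Submodule.map (LinearMap.inl F (Fin vb → F) F) Hb) (Ppt F vb)
    rw [hsup, hinf, finrank_bot] at h1
    have h2 : Module.finrank F ↥(Submodule.map (LinearMap.inl F (Fin vb → F) F) Hb)
        = Module.finrank F ↥Hb :=
      (Submodule.equivMapOfInjective (LinearMap.inl F (Fin vb → F) F) LinearMap.inl_injective Hb).finrank_eq.symm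
    have h4 : Module.finrank F ↥H = vb := by
      have hH' : Module.finrank F ↥H = Module.finrank F ((Fin vb → F) × F) - 1 := hH
      rw [finrank_W] at hH'
      omega
    show Module.finrank F ↥Hb = Module.finrank F (Fin vb → F) - 1
    rw [Module.finrank_fin_fun]
    rw [h2, finrank_Ppt, h4] at h1
    omega
  refine ⟨hHbH, ?_⟩
  have hfilter : (coneSet F Cb).filter (fun P => P ≤ H) =
      coneSet F (Cb.filter (fun Qb => Qb ≤ Hb)) := by
    ext Q
    rw [Finset.mem_filter, mem_coneSet, mem_coneSet]
    constructor
    · rintro ⟨(rfl | ⟨Qb, hQb, c, rfl⟩), hle⟩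
      · exact Or.inl rfl
      · obtain ⟨hw, hQs⟩ := pgen_spec (hpts Qb hQb)
        refine Or.inr ⟨Qb, Finset.mem_filter.mpr ⟨hQb, ?_⟩, c, rfl⟩
        rw [keyPt, Submodule.span_singleton_le_iff_mem] at hle
        have hwHb : pgen F Qb ∈ Hb := (hmemHb _).mpr ((hshift _ c).mp hle)
        rw [hQs, Submodule.span_singleton_le_iff_mem]
        exact hwHb
    · rintro (rfl | ⟨Qb, hQb', c, rfl⟩)
      · refine ⟨Or.inl rfl, ?_⟩
        rw [Ppt, Submodule.span_singleton_le_iff_mem]; exact h01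
      · obtain ⟨hQb, hQbH⟩ := Finset.mem_filter.mp hQb'
        obtain ⟨hw, hQs⟩ := pgen_spec (hpts Qb hQb)
        refine ⟨Or.inr ⟨Qb, hQb, c, rfl⟩, ?_⟩
        rw [keyPt, Submodule.span_singleton_le_iff_mem]
        have hwHb : pgen F Qb ∈ Hb := hQbH (by
          have h0 : pgen F Qb ∈ Submodule.span F {pgen F Qb} :=
            Submodule.mem_span_singleton_self _
          rwa [← hQs] at h0)
        exact (hshift _ c).mpr ((hmemHb _).mp hwHb)
  unfold interCard
  rw [hfilter, coneSet_card (fun Qb h => pgen_spec (hpts Qb (Finset.mem_of_mem_filter _ h)))]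

lemma case2 {Cb : Finset (Submodule F (Fin vb → F))} (hpts : IsPointSet Cb)
    {H : Submodule F ((Fin vb → F) × F)} (hH : IsHyperplane H)
    (h01 : ((0 : Fin vb → F), (1:F)) ∉ H) :
    interCard (coneSet F Cb) H = Cb.card := by
  classical
  have hH' : Module.finrank F ↥H = vb := by
    have h : Module.finrank F ↥H = Module.finrank F ((Fin vb → F) × F) - 1 := hH
    rw [finrank_W] at h
    omega
  have htop : H ⊔ Ppt F vb = ⊤ := by
    apply Submodule.eq_top_of_finrank_eq
    have hlt : H < H ⊔ Ppt F vb := by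
      refine lt_of_le_of_ne le_sup_left ?_
      intro he
      exact h01 (by rw [he]; exact Submodule.mem_sup_right (Submodule.mem_span_singleton_self _))
    have h1 : Module.finrank F ↥H < Module.finrank F ↥(H ⊔ Ppt F vb) :=
      Submodule.finrank_lt_finrank_of_lt hlt
    have h2 : Module.finrank F ↥(H ⊔ Ppt F vb) ≤ Module.finrank F ((Fin vb → F) × F) :=
      Submodule.finrank_le _
    rw [finrank_W] at h2 ⊢
    omega
  have hex : ∀ x : Fin vb → F, ∃ c : F, (x, c) ∈ H := by
    intro x
    have hx : (x, (0:F)) ∈ H ⊔ Ppt F vb := by rw [htop]; exact Submodule.mem_top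
    rw [Submodule.mem_sup] at hx
    obtain ⟨⟨y1, y2⟩, hy, z, hz, hyz⟩ := hx
    obtain ⟨t, rfl⟩ := Submodule.mem_span_singleton.mp hz
    have h1 : y1 = x := by
      have := congrArg Prod.fst hyz; simpa using this
    have h2 : y2 = -t := by
      have h := congrArg Prod.snd hyz
      simp at h
      exact eq_neg_of_add_eq_zero_left h
    exact ⟨-t, by rw [← h1, ← h2]; exact hy⟩
  choose cH hcH using hex
  have huniq : ∀ (x : Fin vb → F) (c : F), (x, c) ∈ H → c = cH x := by
    intro x c hc
    by_contra hne
    have hne' : c - cH x ≠ 0 := sub_ne_zero.mpr hne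
    have hsub : ((0 : Fin vb → F), c - cH x) ∈ H := by
      have hs := Submodule.sub_mem H hc (hcH x)
      have he : ((0 : Fin vb → F), c - cH x) = (x, c) - (x, cH x) := by
        simp [Prod.ext_iff]
      rwa [he]
    apply h01
    have hs := Submodule.smul_mem H (c - cH x)⁻¹ hsub
    have he : ((0 : Fin vb → F), (1:F)) = (c - cH x)⁻¹ • ((0 : Fin vb → F), c - cH x) := by
      simp [Prod.ext_iff, inv_mul_cancel₀ hne']
    rwa [he]
  have hfilter : (coneSet F Cb).filter (fun P => P ≤ H) =
      Cb.image (fun Qb => keyPt F Qb (cH (pgen F Qb))) := by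
    ext Q
    rw [Finset.mem_filter, mem_coneSet, Finset.mem_image]
    constructor
    · rintro ⟨(rfl | ⟨Qb, hQb, c, rfl⟩), hle⟩
      · rw [Ppt, Submodule.span_singleton_le_iff_mem] at hle
        exact absurd hle h01
      · rw [keyPt, Submodule.span_singleton_le_iff_mem] at hle
        refine ⟨Qb, hQb, ?_⟩
        rw [huniq _ _ hle]
    · rintro ⟨Qb, hQb, rfl⟩
      refine ⟨Or.inr ⟨Qb, hQb, _, rfl⟩, ?_⟩
      rw [keyPt, Submodule.span_singleton_le_iff_mem]
      exact hcH _
  unfold interCard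
  rw [hfilter, Finset.card_image_of_injOn]
  intro Qb hQb Qb' hQb' hkey
  exact (keyPt_eq (pgen_spec (hpts Qb (Finset.mem_coe.mp hQb))).1
    (pgen_spec (hpts Qb (Finset.mem_coe.mp hQb))).2
    (pgen_spec (hpts Qb' (Finset.mem_coe.mp hQb'))).2 hkey).1

lemma H0_hyper : IsHyperplane (Submodule.map (LinearMap.inl F (Fin vb → F) F) ⊤) ∧
    ((0 : Fin vb → F), (1:F)) ∉ Submodule.map (LinearMap.inl F (Fin vb → F) F) ⊤ := by
  constructor
  · show Module.finrank F ↥(Submodule.map (LinearMap.inl F (Fin vb → F) F) ⊤)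
      = Module.finrank F ((Fin vb → F) × F) - 1
    rw [finrank_W]
    have h2 : Module.finrank F ↥(Submodule.map (LinearMap.inl F (Fin vb → F) F) ⊤)
        = Module.finrank F ↥(⊤ : Submodule F (Fin vb → F)) :=
      ((⊤ : Submodule F (Fin vb → F)).equivMapOfInjective (LinearMap.inl F (Fin vb → F) F) LinearMap.inl_injective).finrank_eq.symm
    rw [h2, finrank_top, Module.finrank_fin_fun]
    omega
  · intro h
    obtain ⟨x, -, hx⟩ := Submodule.mem_map.mp h
    have := congrArg Prod.snd hx
    simp at this

end Cone

lemma modeq_helper (q r nb : ℕ) :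
    (Nat.ModEq (q ^ (r + 1)) nb (1 + q * nb)) ↔
      ((q : ℤ) - 1) * (nb : ℤ) ≡ -1 [ZMOD (q : ℤ) ^ (r + 1)] := by
  rw [← Int.natCast_modEq_iff]
  rw [Int.modEq_iff_dvd, Int.modEq_iff_dvd]
  push_cast
  constructor <;> intro h
  · have he : (-1 : ℤ) - ((q:ℤ) - 1) * nb = -((1 + q * nb) - nb) := by ring
    rw [he, dvd_neg]
    exact h
  · have he : ((1:ℤ) + q * nb) - nb = -((-1:ℤ) - ((q:ℤ) - 1) * nb) := by ring
    rw [he, dvd_neg]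
    exact h

/-- Example 4.4 (cone construction): `C` is the set of points on the lines joining the
point `P = ⟨(0,1)⟩` of `F^(v̄+1) = F^v̄ × F` to the embedded points of a nonempty
`q^r`-divisible set `C̄` with `|C̄| = n̄`.  Then `|C| = 1 + q·n̄`, and `C` is
`q^(r+1)`-divisible iff `(q-1)·n̄ ≡ -1 (mod q^(r+1))`. -/
theorem cone_construction (F : Type) [Field F] [Fintype F] (q r vb nb : ℕ)
    (hq : Fintype.card F = q) (hr : 1 ≤ r) (hv : 2 ≤ vb)
    (Cb : Finset (Submodule F (Fin vb → F))) (hpts : IsPointSet Cb) (hne : Cb.Nonempty)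
    (hdiv : DivisibleSet (q ^ r) Cb) (hn : Cb.card = nb)
    (C : Finset (Submodule F ((Fin vb → F) × F)))
    (hC : C = Finset.univ.filter (fun Q : Submodule F ((Fin vb → F) × F) =>
        Module.finrank F ↥Q = 1 ∧ ∃ Qb ∈ Cb,
          Q ≤ Submodule.map (LinearMap.inl F (Fin vb → F) F) Qb ⊔
              Submodule.span F {((0 : Fin vb → F), (1 : F))})) :
    C.card = 1 + q * nb ∧
    (DivisibleSet (q ^ (r + 1)) C ↔
      ((q : ℤ) - 1) * (nb : ℤ) ≡ -1 [ZMOD (q : ℤ) ^ (r + 1)]) := by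
  classical
  subst hn
  have hS : ∀ Qb ∈ Cb, pgen F Qb ≠ 0 ∧ Qb = Submodule.span F {pgen F Qb} :=
    fun Qb h => pgen_spec (hpts Qb h)
  have hCeq : C = coneSet F Cb := by rw [hC]; exact cone_eq hpts hne
  have hcard : C.card = 1 + q * Cb.card := by rw [hCeq, coneSet_card hS, hq]
  refine ⟨hcard, ?_⟩
  rw [← modeq_helper q r Cb.card]
  constructor
  · intro hD
    obtain ⟨hH0, h01⟩ := (H0_hyper (F := F) (vb := vb))
    have h := hD _ hH0
    rw [hCeq] at h
    rw [case2 hpts hH0 h01, coneSet_card hS, hq] at h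
    exact h
  · intro hmod H hH
    rw [hcard, hCeq]
    by_cases h01 : ((0 : Fin vb → F), (1:F)) ∈ H
    · obtain ⟨hHb, hcount⟩ := case1 hpts hH h01
      rw [hcount, hq]
      have h1 := hdiv _ hHb
      have h2 := Nat.ModEq.mul_left' (c := q) h1
      have h3 : q * q ^ r = q ^ (r + 1) := by ring
      rw [h3] at h2
      exact h2.add_left 1
    · rw [case2 hpts hH h01]
      exact hmod
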